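/- If F satisfies (S1) {g} ∈ F for all g ∈ G, (S2) closure under subsets, (S3) closure under finite unions, (A2) closure under sumsets, and (A4) closure under finite-sum closure of subsets of G^{≥0}, then k((F)) is a Hahn field in k((G)), i.e. a subfield containing all monomials α t^g for α ∈ k, g ∈ G. -/

import Mathlib

open scoped Pointwise

open HahnSeries in
private lemma pow_support_subset_closure {G : Type*} [AddCommGroup G] [LinearOrder G] [IsOrderedAddMonoid G]
    {k : Type*} [Field k] (y : HahnSeries G k) :
    ∀ n : ℕ, (y ^ n).support ⊆ (AddSubmonoid.closure y.support : Set G) := by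
  intro n
  induction n with
  | zero =>
    intro g hg
    simp only [pow_zero, support_one, Set.mem_singleton_iff] at hg
    rw [hg, SetLike.mem_coe]
    exact AddSubmonoid.zero_mem _
  | succ n ih =>
    intro g hg
    obtain ⟨i, hi, j, hj, rfl⟩ := support_mul_subset hg
    exact SetLike.mem_coe.2 (AddSubmonoid.add_mem _ (ih hi) (AddSubmonoid.subset_closure hj))

/-- If `F` satisfies (S1) all singletons `{g} ∈ F`, (S2) closure under
subsets, (S3) closure under finite unions, (A2) closure under sumsets, and (A4) closure
under finite-sum closures of members contained in `G^{≥0}`, then `k((F))` is a Hahn field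
in `k((G))`: a subfield containing all monomials `α t^g` for `α ∈ k`, `g ∈ G`. -/
theorem khull_is_hahnField
    {G : Type*} [AddCommGroup G] [LinearOrder G] [IsOrderedAddMonoid G] {k : Type*} [Field k]
    (F : Set (Set G)) (hWF : ∀ A ∈ F, A.IsWF)
    (hS1 : ∀ g : G, ({g} : Set G) ∈ F)
    (hS2 : ∀ A ∈ F, ∀ B ⊆ A, B ∈ F)
    (hS3 : ∀ A ∈ F, ∀ B ∈ F, A ∪ B ∈ F)
    (hA2 : ∀ A ∈ F, ∀ B ∈ F, A + B ∈ F)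
    (hA4 : ∀ A ∈ F, A ⊆ {g : G | 0 ≤ g} → (AddSubmonoid.closure A : Set G) ∈ F) :
    ∃ K : Subfield (HahnSeries G k),
      (K : Set (HahnSeries G k)) = {a : HahnSeries G k | a.support ∈ F} ∧
      ∀ (α : k) (g : G), HahnSeries.single g α ∈ K := by
  classical
  have hEmpty : (∅ : Set G) ∈ F := hS2 _ (hS1 0) ∅ (Set.empty_subset _)
  have hsingle : ∀ (g : G) (α : k), (HahnSeries.single g α : HahnSeries G k).support ∈ F :=
    fun g α => hS2 _ (hS1 g) _ HahnSeries.support_single_subset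
  refine ⟨{
      carrier := {a : HahnSeries G k | a.support ∈ F}
      zero_mem' := by simpa using hEmpty
      one_mem' := hS2 _ (hS1 0) _ (by rw [HahnSeries.support_one])
      add_mem' := fun {a b} ha hb =>
        hS2 _ (hS3 _ ha _ hb) _ (HahnSeries.support_add_subset _ _)
      neg_mem' := fun {a} ha => by simpa [HahnSeries.support_neg] using ha
      mul_mem' := fun {a b} ha hb =>
        hS2 _ (hA2 _ ha _ hb) _ HahnSeries.support_mul_subset
      inv_mem' := ?_ }, rfl, fun α g => hsingle g α⟩
  intro x hx
  by_cases x0 : x = 0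
  · simpa [x0] using hEmpty
  have hc : x.leadingCoeff ≠ 0 := HahnSeries.leadingCoeff_ne_zero.mpr x0
  have hu := HahnSeries.unit_aux x (inv_mul_cancel₀ hc) (-x.order) (neg_add_cancel x.order)
  set y : HahnSeries G k :=
    1 - HahnSeries.single (-x.order) x.leadingCoeff⁻¹ * x with hy
  -- the inverse is `single (-order) c⁻¹ * ∑ yⁿ`
  set z : HahnSeries G k :=
    HahnSeries.single (-x.order) x.leadingCoeff⁻¹ *
      (HahnSeries.SummableFamily.powers y).hsum with hz
  have hxz : x * z = 1 := by
    have h := HahnSeries.SummableFamily.one_sub_self_mul_hsum_powers hu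
    have h1y : 1 - y = HahnSeries.single (-x.order) x.leadingCoeff⁻¹ * x := by
      rw [hy, sub_sub_cancel]
    rw [h1y] at h
    rw [hz, ← mul_assoc, mul_comm x, h]
  have hinv : x⁻¹ = z := (eq_inv_of_mul_eq_one_right hxz).symm
  rw [Set.mem_setOf_eq, hinv]
  -- support of y is in F and consists of nonnegative elements
  have hyF : y.support ∈ F := by
    have h1 : y.support ⊆ {0} ∪ ({-x.order} + x.support) := by
      intro g hg
      rcases HahnSeries.support_add_subset (x := (1 : HahnSeries G k))
          (y := -(HahnSeries.single (-x.order) x.leadingCoeff⁻¹ * x))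
          (by simpa [sub_eq_add_neg, hy] using hg) with h | h
      · rw [HahnSeries.support_one] at h
        exact Or.inl h
      · rw [HahnSeries.support_neg] at h
        obtain ⟨i, hi, j, hj, rfl⟩ := HahnSeries.support_mul_subset h
        exact Or.inr ⟨i, HahnSeries.support_single_subset hi, j, hj, rfl⟩
    exact hS2 _ (hS3 _ (hS1 0) _ (hA2 _ (hS1 (-x.order)) _ hx)) _ h1
  have hynn : y.support ⊆ {g : G | 0 ≤ g} := fun g hg => by
    have h2 : ((0 : G) : WithTop G) < (g : WithTop G) :=
      lt_of_lt_of_le hu (HahnSeries.orderTop_le_of_coeff_ne_zero hg)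
    exact_mod_cast h2.le
  have hclos : (AddSubmonoid.closure y.support : Set G) ∈ F := hA4 _ hyF hynn
  refine hS2 _ (hA2 _ (hS1 (-x.order)) _ hclos) _ ?_
  intro g hg
  obtain ⟨i, hi, j, hj, rfl⟩ := HahnSeries.support_mul_subset hg
  refine ⟨i, HahnSeries.support_single_subset hi, j, ?_, rfl⟩
  have := HahnSeries.SummableFamily.support_hsum_subset hj
  simp only [Set.mem_iUnion] at this
  obtain ⟨n, hn⟩ := this
  have hpow : ((HahnSeries.SummableFamily.powers y) n).support = (y ^ n).support := by
    rw [show (HahnSeries.SummableFamily.powers y) n = y ^ n from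
      congrFun (HahnSeries.SummableFamily.coe_powers (x := y) hu) n]
  exact pow_support_subset_closure y n (hpow ▸ hn)
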